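/- arXiv:1208.1897 — 2 statements merged into one kernel-verified Lean document; each statement's English description precedes it below -/
import Mathlib

section
/- G(V) is bipartite if and only if either V has a composition series of length at most 2, or V has a composition series of length 3 and a unique maximal R-submodule. -/
/-- The vertices of the intersection graph: proper submodules of `V`. -/
def ProperSubmodule (R V : Type*) [Ring R] [AddCommGroup V] [Module R V] :=
  {W : Submodule R V // W ≠ ⊥ ∧ W ≠ ⊤}

/-- The intersection graph of proper submodules of `V`: two distinct proper
submodules are adjacent iff their intersection is nonzero. -/
def intersectionGraph (R V : Type*) [Ring R] [AddCommGroup V] [Module R V] :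
    SimpleGraph (ProperSubmodule R V) where
  Adj U W := U ≠ W ∧ U.1 ⊓ W.1 ≠ ⊥
  symm := by
    refine ⟨?_⟩
    intro U W h
    exact ⟨h.1.symm, by rw [inf_comm]; exact h.2⟩
  loopless := ⟨fun U h => h.1 rfl⟩

/-- `V` has a composition series (from `⊥` to `⊤`) of length `n`. -/
def HasCompositionSeriesOfLength (R V : Type*) [Ring R] [AddCommGroup V] [Module R V]
    (n : ℕ) : Prop :=
  ∃ s : RelSeries {p : Submodule R V × Submodule R V | p.1 ⋖ p.2},
    s.head = ⊥ ∧ s.last = ⊤ ∧ s.length = n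

/-- In a modular lattice, if `⊥ ⋖ x ⋖ t` then there is no chain `⊥ < A < B < t`. -/
lemma aux_no_chain {α : Type*} [Lattice α] [OrderBot α] [IsModularLattice α] {x t A B : α}
    (h1 : (⊥ : α) ⋖ x) (h2 : x ⋖ t) (hA : ⊥ < A) (hAB : A < B) (hBt : B < t) : False := by
  have hatom : ∀ c, c ≤ x → c = ⊥ ∨ c = x := by
    intro c hc
    rcases eq_or_lt_of_le hc with h | h
    · exact Or.inr h
    · by_cases hc0 : c = ⊥
      · exact Or.inl hc0
      · exact absurd h (h1.2 (bot_lt_iff_ne_bot.2 hc0))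
  have hco : ∀ c, x ≤ c → c < t → c = x := by
    intro c hc hct
    rcases eq_or_lt_of_le hc with h | h
    · exact h.symm
    · exact absurd hct (h2.2 h)
  rcases hatom (x ⊓ A) inf_le_left with hxA | hxA
  · have hsup : x ⊔ A = t := by
      have hle : x ⊔ A ≤ t := sup_le h2.1.le (hAB.trans hBt).le
      rcases eq_or_lt_of_le hle with h | h
      · exact h
      · exfalso
        have h3 := hco (x ⊔ A) le_sup_left h
        have hAx : A ≤ x := le_sup_right.trans h3.le
        have hab : A = ⊥ := by
          rw [← hxA]
          exact le_antisymm (le_inf hAx le_rfl) inf_le_right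
        exact hA.ne' hab
    have hBmod : A ⊔ x ⊓ B = B := by
      rw [← sup_inf_assoc_of_le x hAB.le, sup_comm A x, hsup, inf_eq_right.mpr hBt.le]
    rcases hatom (x ⊓ B) inf_le_left with h | h
    · rw [h, sup_bot_eq] at hBmod
      exact hAB.ne hBmod
    · have hxB : x ≤ B := inf_eq_left.mp h
      have hBx : B = x := hco B hxB hBt
      have hAx : A < x := hBx ▸ hAB
      have hab : A = ⊥ := by
        rw [← hxA]
        exact le_antisymm (le_inf hAx.le le_rfl) inf_le_right
      exact hA.ne' hab
  · have hxA' : x ≤ A := inf_eq_left.mp hxA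
    have hAeq := hco A hxA' (hAB.trans hBt)
    have hBeq := hco B (hxA'.trans hAB.le) hBt
    exact hAB.ne (hAeq.trans hBeq.symm)

/-- A triangle in the intersection graph contradicts 2-colorability. -/
lemma aux_triangle {R V : Type*} [Ring R] [AddCommGroup V] [Module R V]
    (hc : (intersectionGraph R V).Colorable 2) {A B C : Submodule R V}
    (hA : A ≠ ⊥ ∧ A ≠ ⊤) (hB : B ≠ ⊥ ∧ B ≠ ⊤) (hC : C ≠ ⊥ ∧ C ≠ ⊤)
    (hAB : A ≠ B) (hAC : A ≠ C) (hBC : B ≠ C)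
    (iAB : A ⊓ B ≠ ⊥) (iAC : A ⊓ C ≠ ⊥) (iBC : B ⊓ C ≠ ⊥) : False := by
  obtain ⟨c⟩ := hc
  have h1 := c.valid (show (intersectionGraph R V).Adj ⟨A, hA⟩ ⟨B, hB⟩ from
    ⟨fun h => hAB (congrArg (fun w : ProperSubmodule R V => w.1) h), iAB⟩)
  have h2 := c.valid (show (intersectionGraph R V).Adj ⟨A, hA⟩ ⟨C, hC⟩ from
    ⟨fun h => hAC (congrArg (fun w : ProperSubmodule R V => w.1) h), iAC⟩)
  have h3 := c.valid (show (intersectionGraph R V).Adj ⟨B, hB⟩ ⟨C, hC⟩ from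
    ⟨fun h => hBC (congrArg (fun w : ProperSubmodule R V => w.1) h), iBC⟩)
  have v1 : (c ⟨A, hA⟩).val ≠ (c ⟨B, hB⟩).val := fun h => h1 (Fin.ext h)
  have v2 : (c ⟨A, hA⟩).val ≠ (c ⟨C, hC⟩).val := fun h => h2 (Fin.ext h)
  have v3 : (c ⟨B, hB⟩).val ≠ (c ⟨C, hC⟩).val := fun h => h3 (Fin.ext h)
  have b1 := (c ⟨A, hA⟩).isLt
  have b2 := (c ⟨B, hB⟩).isLt
  have b3 := (c ⟨C, hC⟩).isLt
  omega

/-- A chain of three proper submodules contradicts 2-colorability. -/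
lemma aux_noChain3 {R V : Type*} [Ring R] [AddCommGroup V] [Module R V]
    (hc : (intersectionGraph R V).Colorable 2) {A B C : Submodule R V}
    (hA : A ≠ ⊥) (hC : C ≠ ⊤) (h1 : A < B) (h2 : B < C) : False := by
  have hBb : B ≠ ⊥ := fun h => hA (le_bot_iff.1 (h ▸ h1.le))
  have hCb : C ≠ ⊥ := fun h => hBb (le_bot_iff.1 (h ▸ h2.le))
  refine aux_triangle hc ⟨hA, ne_top_of_lt (h1.trans h2)⟩ ⟨hBb, ne_top_of_lt h2⟩ ⟨hCb, hC⟩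
    h1.ne (h1.trans h2).ne h2.ne ?_ ?_ ?_
  · rwa [inf_eq_left.mpr h1.le]
  · rwa [inf_eq_left.mpr (h1.trans h2).le]
  · rwa [inf_eq_left.mpr h2.le]

theorem stmt9 (R V : Type*) [Ring R] [AddCommGroup V] [Module R V] :
    (intersectionGraph R V).Colorable 2 ↔
      ((∃ n ≤ 2, HasCompositionSeriesOfLength R V n) ∨
        (HasCompositionSeriesOfLength R V 3 ∧
          ∃! M : Submodule R V, IsCoatom M)) := by
  classical
  constructor
  · intro hc
    by_cases hbt : (⊥ : Submodule R V) = ⊤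
    · left
      exact ⟨0, by omega, RelSeries.singleton _ ⊥, rfl, hbt, rfl⟩
    by_cases hex : ∃ W : Submodule R V, W ≠ ⊥ ∧ W ≠ ⊤
    swap
    · -- no proper submodule : length 1
      push_neg at hex
      left
      refine ⟨1, by omega, ⟨1, ![⊥, ⊤], ?_⟩, ?_, ?_, rfl⟩
      · intro i
        fin_cases i
        simp only [Fin.isValue, Matrix.cons_val_zero, Matrix.cons_val_one, Matrix.head_cons]
        exact ⟨lt_top_iff_ne_top.2 hbt, fun X hX hXt => hXt.ne (hex X hX.ne')⟩
      · rfl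
      · rfl
    by_cases h2 : ∃ A B : Submodule R V, (A ≠ ⊥ ∧ A ≠ ⊤) ∧ (B ≠ ⊥ ∧ B ≠ ⊤) ∧ A < B
    · -- length 3 case
      obtain ⟨A, B, hA, hB, hAB⟩ := h2
      have cAB : A ⋖ B := ⟨hAB, fun X hAX hXB => aux_noChain3 hc hA.1 hB.2 hAX hXB⟩
      have cbA : (⊥ : Submodule R V) ⋖ A :=
        ⟨bot_lt_iff_ne_bot.2 hA.1, fun X hX hXA => aux_noChain3 hc hX.ne' hB.2 hXA hAB⟩
      have cBt : B ⋖ (⊤ : Submodule R V) :=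
        ⟨lt_top_iff_ne_top.2 hB.2, fun X hBX hXt => aux_noChain3 hc hA.1 (ne_top_of_lt hXt) hAB hBX⟩
      right
      refine ⟨⟨⟨3, ![⊥, A, B, ⊤], ?_⟩, ?_, ?_, rfl⟩, B, cBt.isCoatom, ?_⟩
      · intro i
        fin_cases i
        · simpa using cbA
        · simpa using cAB
        · simpa using cBt
      · rfl
      · rfl
      · -- uniqueness of the coatom
        intro N hN
        by_contra hNB
        have hNtop : N ≠ ⊤ := hN.1
        have hNbot : N ≠ ⊥ := by
          intro h
          subst h
          exact hA.2 (hN.2 A (bot_lt_iff_ne_bot.2 hA.1))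
        have hNleB : ¬N ≤ B := by
          intro h
          rcases eq_or_lt_of_le h with h' | h'
          · exact hNB h'
          · exact hB.2 (hN.2 B h')
        have hBleN : ¬B ≤ N := by
          intro h
          rcases eq_or_lt_of_le h with h' | h'
          · exact hNB h'.symm
          · exact (cBt.2 h') (lt_top_iff_ne_top.2 hNtop)
        have hNB0 : N ⊓ B = ⊥ := by
          by_contra hi
          refine aux_triangle hc ⟨hNbot, hNtop⟩ hB
            ⟨hi, fun h => hB.2 (top_le_iff.1 (h ▸ inf_le_right))⟩
            hNB (fun h => hNleB (h ▸ inf_le_right)) (fun h => hBleN (h ▸ inf_le_left))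
            hi ?_ ?_
          · rwa [← inf_assoc, inf_idem]
          · rwa [inf_comm B (N ⊓ B), inf_assoc, inf_idem]
        have hNA : N ⊔ A ≠ ⊤ := by
          intro h
          have hm : (A ⊔ N) ⊓ B = A ⊔ N ⊓ B := sup_inf_assoc_of_le N hAB.le
          rw [hNB0, sup_bot_eq, sup_comm A N, h, top_inf_eq] at hm
          exact hAB.ne hm.symm
        have hAleNA : A ≤ N ⊔ A := le_sup_right
        refine aux_triangle hc hA hB
          ⟨fun h => hA.1 (le_bot_iff.1 (h ▸ hAleNA)), hNA⟩
          hAB.ne (fun h => hNleB (le_trans (h ▸ le_sup_left) hAB.le))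
          (fun h => hNleB (h ▸ le_sup_left)) ?_ ?_ ?_
        · rw [inf_eq_left.mpr hAB.le]; exact hA.1
        · rw [inf_eq_left.mpr hAleNA]; exact hA.1
        · intro h
          exact hA.1 (le_bot_iff.1 (h ▸ le_inf hAB.le hAleNA))
    · -- antichain case : length 2
      push_neg at h2
      obtain ⟨W, hW⟩ := hex
      have cbW : (⊥ : Submodule R V) ⋖ W :=
        ⟨bot_lt_iff_ne_bot.2 hW.1, fun X hX hXW =>
          h2 X W ⟨hX.ne', ne_top_of_lt hXW⟩ hW hXW⟩
      have cWt : W ⋖ (⊤ : Submodule R V) :=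
        ⟨lt_top_iff_ne_top.2 hW.2, fun X hWX hXt =>
          h2 W X hW ⟨fun h => hW.1 (le_bot_iff.1 (h ▸ hWX.le)), hXt.ne⟩ hWX⟩
      left
      refine ⟨2, by omega, ⟨2, ![⊥, W, ⊤], ?_⟩, ?_, ?_, rfl⟩
      · intro i
        fin_cases i
        · simpa using cbW
        · simpa using cWt
      · rfl
      · rfl
  · rintro (⟨n, hn, s, hh, hl, hlen⟩ | ⟨⟨s, hh, hl, hlen⟩, M, hM, huniq⟩)
    · -- length ≤ 2 : no edges at all
      have noedge : ∀ a b : ProperSubmodule R V, ¬(intersectionGraph R V).Adj a b := by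
        rintro ⟨U, hU⟩ ⟨W, hW⟩ ⟨hne, hinf⟩
        have hUW : U ≠ W := fun h => hne (Subtype.ext h)
        have hinf' : U ⊓ W ≠ ⊥ := hinf
        interval_cases n
        · -- length 0 : ⊥ = ⊤
          have hbt : (⊥ : Submodule R V) = ⊤ := by
            rw [← hh, ← hl, RelSeries.head, RelSeries.last,
              show Fin.last s.length = ⟨0, by omega⟩ from Fin.ext (by simp [hlen])]
            rfl
          exact hU.1 (le_bot_iff.1 (hbt ▸ (le_top : U ≤ ⊤)))
        · -- length 1 : ⊥ ⋖ ⊤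
          have cbt : (⊥ : Submodule R V) ⋖ ⊤ := by
            rw [← hh, ← hl, RelSeries.head, RelSeries.last,
              show Fin.last s.length = ⟨1, by omega⟩ from Fin.ext (by simp [hlen])]
            exact s.step ⟨0, by omega⟩
          exact cbt.2 (bot_lt_iff_ne_bot.2 hU.1) (lt_top_iff_ne_top.2 hU.2)
        · -- length 2 : ⊥ ⋖ x ⋖ ⊤
          have c1 : (⊥ : Submodule R V) ⋖ s.toFun ⟨1, by omega⟩ := by
            rw [← hh]
            exact s.step ⟨0, by omega⟩
          have c2 : s.toFun ⟨1, by omega⟩ ⋖ (⊤ : Submodule R V) := by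
            rw [← hl, RelSeries.last,
              show Fin.last s.length = ⟨2, by omega⟩ from Fin.ext (by simp [hlen])]
            exact s.step ⟨1, by omega⟩
          by_cases hle : U ≤ W
          · exact aux_no_chain c1 c2 (bot_lt_iff_ne_bot.2 hU.1) (lt_of_le_of_ne hle hUW)
              (lt_top_iff_ne_top.2 hW.2)
          · exact aux_no_chain c1 c2 (bot_lt_iff_ne_bot.2 hinf')
              (lt_of_le_of_ne inf_le_left (fun h => hle (h ▸ inf_le_right)))
              (lt_top_iff_ne_top.2 hU.2)
      exact ⟨SimpleGraph.Coloring.mk (fun _ => (0 : Fin 2)) fun {a b} h => absurd h (noedge a b)⟩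
    · -- length 3 with unique coatom
      set s1 := s.toFun ⟨1, by omega⟩ with hs1
      set s2 := s.toFun ⟨2, by omega⟩ with hs2
      have c0 : (⊥ : Submodule R V) ⋖ s1 := by
        rw [← hh]
        exact s.step ⟨0, by omega⟩
      have c1 : s1 ⋖ s2 := s.step ⟨1, by omega⟩
      have c2 : s2 ⋖ (⊤ : Submodule R V) := by
        rw [← hl, RelSeries.last,
          show Fin.last s.length = ⟨3, by omega⟩ from Fin.ext (by simp [hlen])]
        exact s.step ⟨2, by omega⟩
      have hMs2 : s2 = M := huniq s2 c2.isCoatom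
      -- every proper submodule other than s2 is an atom
      have key : ∀ U : Submodule R V, U ≠ ⊥ → U ≠ ⊤ → U ≠ s2 → ∀ X ≤ U, X = ⊥ ∨ X = U := by
        intro U hUb hUt hUs2
        by_cases hle : U ≤ s2
        · have hUlt : U < s2 := lt_of_le_of_ne hle hUs2
          intro X hX
          by_cases hXb : X = ⊥
          · exact Or.inl hXb
          right
          by_contra hXU
          exact aux_no_chain c0 c1 (bot_lt_iff_ne_bot.2 hXb) (lt_of_le_of_ne hX hXU) hUlt
        · exfalso
          have hsup : U ⊔ s2 = ⊤ := by
            rcases eq_or_lt_of_le (le_sup_right : s2 ≤ U ⊔ s2) with h | h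
            · exact absurd (le_sup_left.trans h.ge) hle
            · by_contra hne
              exact (c2.2 h) (lt_top_iff_ne_top.2 hne)
          have hKne : U ⊓ s2 ≠ s2 := by
            intro h
            have hs2U : s2 ≤ U := h ▸ inf_le_left
            rcases eq_or_lt_of_le hs2U with h' | h'
            · exact hle h'.ge
            · exact (c2.2 h') (lt_top_iff_ne_top.2 hUt)
          by_cases hK : U ⊓ s2 = ⊥
          · have hCs2 : (s1 ⊔ U) ⊓ s2 = s1 := by
              rw [sup_inf_assoc_of_le U c1.1.le, hK, sup_bot_eq]
            have hcov : s1 ⊔ U ⋖ (s1 ⊔ U) ⊔ s2 :=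
              covBy_sup_of_inf_covBy_right (by rwa [hCs2])
            have hCtop : (s1 ⊔ U) ⊔ s2 = ⊤ := by
              have hle2 : U ⊔ s2 ≤ (s1 ⊔ U) ⊔ s2 := sup_le_sup_right le_sup_right _
              rw [hsup] at hle2
              exact top_unique hle2
            rw [hCtop] at hcov
            have hCeq : s1 ⊔ U = s2 := (huniq _ hcov.isCoatom).trans hMs2.symm
            exact hle (hCeq ▸ (le_sup_right : U ≤ s1 ⊔ U))
          · have hKcov : U ⊓ s2 ⋖ s2 := by
              refine ⟨lt_of_le_of_ne inf_le_right hKne, ?_⟩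
              intro X hX1 hX2
              exact aux_no_chain c0 c1 (bot_lt_iff_ne_bot.2 hK) hX1 hX2
            have hcov : U ⋖ U ⊔ s2 := covBy_sup_of_inf_covBy_right hKcov
            rw [hsup] at hcov
            have : U = s2 := (huniq U hcov.isCoatom).trans hMs2.symm
            exact hle this.le
      refine ⟨SimpleGraph.Coloring.mk (fun W => if W.1 = s2 then 0 else 1) ?_⟩
      rintro ⟨U, hU⟩ ⟨W, hW⟩ ⟨hne, hinf⟩
      have hUW : U ≠ W := fun h => hne (Subtype.ext h)
      have hinf' : U ⊓ W ≠ ⊥ := hinf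
      by_cases h1 : U = s2 <;> by_cases h2 : W = s2
      · exact absurd (h1.trans h2.symm) hUW
      · simp [h1, h2]
      · simp [h1, h2]
      · simp only [h1, h2, if_neg]
        intro _
        rcases key U hU.1 hU.2 h1 (U ⊓ W) inf_le_left with h | h
        · exact hinf' h
        · have hUleW : U ≤ W := h ▸ inf_le_right
          rcases key W hW.1 hW.2 h2 U hUleW with h' | h'
          · exact hU.1 h'
          · exact hUW h'
end

section
/- Suppose V is not a simple R-module. Then the domination number of G(V) equals 1 if and only if V is not semisimple. -/
/-- A dominating set for the intersection graph: every vertex outside `D` is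
adjacent to some vertex of `D`. -/
def IsDominatingSet (R V : Type*) [Ring R] [AddCommGroup V] [Module R V]
    (D : Set (ProperSubmodule R V)) : Prop :=
  ∀ v ∉ D, ∃ w ∈ D, (intersectionGraph R V).Adj v w

/-- The domination number: the smallest cardinality of a dominating set. -/
noncomputable def dominationNumber (R V : Type*) [Ring R] [AddCommGroup V] [Module R V] :
    Cardinal :=
  sInf {c : Cardinal | ∃ D : Set (ProperSubmodule R V),
    IsDominatingSet R V D ∧ Cardinal.mk D = c}

/-- A non-semisimple module has a proper essential submodule. -/
lemma exists_proper_essential (R V : Type*) [Ring R] [AddCommGroup V] [Module R V]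
    (h : ¬ IsSemisimpleModule R V) :
    ∃ E : Submodule R V, E ≠ ⊤ ∧ ∀ U : Submodule R V, U ≠ ⊥ → U ⊓ E ≠ ⊥ := by
  -- get a submodule without a complement
  have hW : ∃ W : Submodule R V, ∀ W', ¬ IsCompl W W' := by
    by_contra hc
    push_neg at hc
    exact h ((isSemisimpleModule_iff R V).mpr ⟨fun W => hc W⟩)
  obtain ⟨W, hW⟩ := hW
  -- Zorn: a maximal submodule disjoint from W
  obtain ⟨m, -, hm⟩ := zorn_le_nonempty₀ {W' : Submodule R V | W ⊓ W' = ⊥}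
    (fun c hcs hchain y hy => by
      refine ⟨sSup c, ?_, fun z hz => le_sSup hz⟩
      rw [Set.mem_setOf_eq, eq_bot_iff]
      intro x hx
      obtain ⟨hxW, hxs⟩ := hx
      obtain ⟨p, hpc, hxp⟩ := (Submodule.mem_sSup_of_directed ⟨y, hy⟩
        (hchain.directedOn)).1 hxs
      have : x ∈ W ⊓ p := ⟨hxW, hxp⟩
      rw [hcs hpc] at this
      exact this) ⊥ (by simp)
  refine ⟨W ⊔ m, ?_, ?_⟩
  · intro htop
    exact hW m ⟨disjoint_iff.2 hm.prop, codisjoint_iff.2 htop⟩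
  · intro U hU hUE
    apply hU
    have hUm : U ≤ m := by
      have : W ⊓ (m ⊔ U) = ⊥ := by
        rw [eq_bot_iff]
        rintro x ⟨hxW, hxmU⟩
        obtain ⟨y, hy, u, hu, rfl⟩ := Submodule.mem_sup.1 hxmU
        have hu' : u ∈ U ⊓ (W ⊔ m) := by
          refine ⟨hu, ?_⟩
          have : u = (y + u) - y := by abel
          rw [this]
          exact sub_mem (Submodule.mem_sup_left hxW) (Submodule.mem_sup_right hy)
        rw [hUE] at hu'
        simp only [Submodule.mem_bot] at hu'
        subst hu'
        rw [add_zero] at hxW ⊢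
        have : y ∈ W ⊓ m := ⟨hxW, hy⟩
        rw [hm.prop] at this
        exact this
      have := hm.le_of_ge this le_sup_left
      exact le_trans le_sup_right this
    rw [eq_bot_iff]
    intro u hu
    have : u ∈ U ⊓ (W ⊔ m) := ⟨hu, le_trans hUm le_sup_right hu⟩
    rwa [hUE] at this

theorem stmt11 (R V : Type*) [Ring R] [AddCommGroup V] [Module R V]
    (hV : ¬ IsSimpleModule R V) :
    dominationNumber R V = 1 ↔ ¬ IsSemisimpleModule R V := by
  constructor
  · -- γ = 1 → ¬ semisimple
    intro h1 hss
    -- the set is nonempty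
    have hne : {c : Cardinal | ∃ D : Set (ProperSubmodule R V),
        IsDominatingSet R V D ∧ Cardinal.mk D = c}.Nonempty := by
      by_contra he
      rw [Set.not_nonempty_iff_eq_empty] at he
      rw [dominationNumber, he, Cardinal.sInf_empty] at h1
      exact one_ne_zero h1.symm
    have hmem := csInf_mem hne
    rw [← dominationNumber, h1] at hmem
    obtain ⟨D, hD, hcard⟩ := hmem
    rw [Cardinal.eq_one_iff_unique] at hcard
    obtain ⟨hsub, ⟨⟨v, hv⟩⟩⟩ := hcard
    -- v is the unique element of D; take a complement of v.1
    obtain ⟨C, hC⟩ := exists_isCompl v.1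
    have hCbot : C ≠ ⊥ := by
      intro hb
      exact v.2.2 (by simpa [hb] using codisjoint_iff.1 hC.codisjoint)
    have hCtop : C ≠ ⊤ := by
      intro ht
      exact v.2.1 (by simpa [ht] using disjoint_iff.1 hC.disjoint)
    set u : ProperSubmodule R V := ⟨C, hCbot, hCtop⟩ with hu
    have huD : u ∉ D := by
      intro huD
      have huv : u = v := Subtype.ext_iff.1 (Subsingleton.elim (⟨u, huD⟩ : D) ⟨v, hv⟩)
      have hCv : C = v.1 := congrArg Subtype.val huv
      have : Disjoint v.1 v.1 := hCv ▸ hC.disjoint.symm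
      exact v.2.1 (disjoint_self.1 this)
    obtain ⟨w, hwD, hadj⟩ := hD u huD
    have : w = v := Subtype.ext_iff.1 (Subsingleton.elim (⟨w, hwD⟩ : D) ⟨v, hv⟩)
    rw [this] at hadj
    exact (show _ ∧ _ from hadj).2 (disjoint_iff.1 hC.disjoint.symm)
  · -- ¬ semisimple → γ = 1
    intro hss
    obtain ⟨E, hEtop, hEess⟩ := exists_proper_essential R V hss
    have hVnt : (⊤ : Submodule R V) ≠ ⊥ := by
      intro hb
      apply hss
      have : Subsingleton V := by
        constructor
        intro a b
        have ha : a ∈ (⊥ : Submodule R V) := hb ▸ Submodule.mem_top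
        have hbb : b ∈ (⊥ : Submodule R V) := hb ▸ Submodule.mem_top
        simp only [Submodule.mem_bot] at ha hbb
        rw [ha, hbb]
      exact (isSemisimpleModule_iff R V).mpr Subsingleton.instComplementedLattice
    have hEbot : E ≠ ⊥ := by
      intro hb
      have := hEess ⊤ hVnt
      rw [hb, inf_bot_eq] at this
      exact this rfl
    set e : ProperSubmodule R V := ⟨E, hEbot, hEtop⟩ with he
    have hdom : IsDominatingSet R V {e} := by
      intro v hv
      refine ⟨e, rfl, show _ ∧ _ from ⟨fun heq => hv (heq ▸ rfl), ?_⟩⟩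
      rw [inf_comm]
      exact fun hb => (hEess v.1 v.2.1) (by rwa [inf_comm] at hb)
    have h1mem : (1 : Cardinal) ∈ {c : Cardinal | ∃ D : Set (ProperSubmodule R V),
        IsDominatingSet R V D ∧ Cardinal.mk D = c} :=
      ⟨{e}, hdom, Cardinal.mk_singleton e⟩
    refine le_antisymm (csInf_le (OrderBot.bddBelow _) h1mem) ?_
    apply le_csInf ⟨1, h1mem⟩
    rintro c ⟨D, hD, rfl⟩
    rw [Cardinal.one_le_iff_ne_zero]
    intro hc
    rw [Cardinal.mk_emptyCollection_iff] at hc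
    subst hc
    obtain ⟨w, hw, -⟩ := hD e (Set.notMem_empty e)
    exact hw
end
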